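/- For the Poisson bracket on T*Q ⊕ V* and linear momentum functions P(X⊕w), one has ⟨∂P(X₁⊕w₁)/∂q, X₂⟩ = P((X₂ applied to X₁ pointwise along the connection decomposition)) + P(∇_{X₂}w₁), and consequently {P(X₁⊕w₁), P(X₂⊕w₂)} = −P([X₁,X₂]) + P(∇_{X₂}w₁ − ∇_{X₁}w₂) + P(ω(X₁,X₂) − [w₁,w₂]) = −P([X₁⊕w₁, X₂⊕w₂]). -/

import Mathlib

/-!
Local model of the dual `T*Q ⊕ V*` of a Lagrange–Poincaré bundle `TQ ⊕ V`, as in the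
paper's coordinate computation: `Q` is a chart `Fin n → ℝ`, `V` is trivialized with a
flat connection `∇` (so `∇_X w = dw(X)` and the Christoffel symbols vanish), `ω q` is
the `V`-valued 2-form and `c` the fiberwise Lie bracket; `T*Q ⊕ V*` is `Phase n m`
with coordinates `(q, p, ν)`.
-/

abbrev Phase (n m : ℕ) := (Fin n → ℝ) × (Fin n → ℝ) × (Fin m → ℝ)

noncomputable def Dq {n m : ℕ} (f : Phase n m → ℝ) (x : Phase n m) : Fin n → ℝ :=
  fun i => fderiv ℝ f x (Pi.single i 1, 0, 0)

noncomputable def Dp {n m : ℕ} (f : Phase n m → ℝ) (x : Phase n m) : Fin n → ℝ :=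
  fun i => fderiv ℝ f x (0, Pi.single i 1, 0)

noncomputable def Dnu {n m : ℕ} (f : Phase n m → ℝ) (x : Phase n m) : Fin m → ℝ :=
  fun α => fderiv ℝ f x (0, 0, Pi.single α 1)

/-- The Lagrange–Poincaré Poisson bracket. -/
noncomputable def lpPoisson {n m : ℕ}
    (ω : (Fin n → ℝ) → (Fin n → ℝ) → (Fin n → ℝ) → (Fin m → ℝ))
    (c : (Fin m → ℝ) → (Fin m → ℝ) → (Fin m → ℝ))
    (f g : Phase n m → ℝ) : Phase n m → ℝ :=
  fun x =>
    (∑ i, (Dq f x i * Dp g x i - Dq g x i * Dp f x i))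
      + (∑ α, x.2.2 α * ω x.1 (Dp f x) (Dp g x) α)
      + (∑ α, x.2.2 α * c (Dnu g x) (Dnu f x) α)

/-- The momentum function `P(X⊕w)(p⊕ν) = ⟨p, X⟩ + ⟨ν, w⟩`. -/
def momP {n m : ℕ} (X : (Fin n → ℝ) → (Fin n → ℝ))
    (w : (Fin n → ℝ) → (Fin m → ℝ)) : Phase n m → ℝ :=
  fun x => (∑ i, x.2.1 i * X x.1 i) + (∑ α, x.2.2 α * w x.1 α)

open ContinuousLinearMap in
lemma momP_hasFDerivAt {n m : ℕ} (X : (Fin n → ℝ) → (Fin n → ℝ))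
    (w : (Fin n → ℝ) → (Fin m → ℝ)) (hX : Differentiable ℝ X) (hw : Differentiable ℝ w)
    (x : Phase n m) :
    HasFDerivAt (momP X w)
      ((∑ i : Fin n,
          (x.2.1 i • (((proj i : (Fin n → ℝ) →L[ℝ] ℝ).comp (fderiv ℝ X x.1)).comp
              (fst ℝ (Fin n → ℝ) ((Fin n → ℝ) × (Fin m → ℝ))))
            + X x.1 i • ((proj i : (Fin n → ℝ) →L[ℝ] ℝ).comp
                ((fst ℝ (Fin n → ℝ) (Fin m → ℝ)).comp
                  (snd ℝ (Fin n → ℝ) ((Fin n → ℝ) × (Fin m → ℝ)))))))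
        + ∑ α : Fin m,
          (x.2.2 α • (((proj α : (Fin m → ℝ) →L[ℝ] ℝ).comp (fderiv ℝ w x.1)).comp
              (fst ℝ (Fin n → ℝ) ((Fin n → ℝ) × (Fin m → ℝ))))
            + w x.1 α • ((proj α : (Fin m → ℝ) →L[ℝ] ℝ).comp
                ((snd ℝ (Fin n → ℝ) (Fin m → ℝ)).comp
                  (snd ℝ (Fin n → ℝ) ((Fin n → ℝ) × (Fin m → ℝ))))))) x := by
  have h1 : ∀ i : Fin n, HasFDerivAt (fun y : Phase n m => y.2.1 i * X y.1 i)
      (x.2.1 i • (((proj i : (Fin n → ℝ) →L[ℝ] ℝ).comp (fderiv ℝ X x.1)).comp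
          (fst ℝ (Fin n → ℝ) ((Fin n → ℝ) × (Fin m → ℝ))))
        + X x.1 i • ((proj i : (Fin n → ℝ) →L[ℝ] ℝ).comp
            ((fst ℝ (Fin n → ℝ) (Fin m → ℝ)).comp
              (snd ℝ (Fin n → ℝ) ((Fin n → ℝ) × (Fin m → ℝ)))))) x := by
    intro i
    have hc : HasFDerivAt (fun y : Phase n m => y.2.1 i)
        ((proj i : (Fin n → ℝ) →L[ℝ] ℝ).comp
          ((fst ℝ (Fin n → ℝ) (Fin m → ℝ)).comp
            (snd ℝ (Fin n → ℝ) ((Fin n → ℝ) × (Fin m → ℝ))))) x :=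
      ((proj i : (Fin n → ℝ) →L[ℝ] ℝ).comp
          ((fst ℝ (Fin n → ℝ) (Fin m → ℝ)).comp
            (snd ℝ (Fin n → ℝ) ((Fin n → ℝ) × (Fin m → ℝ))))).hasFDerivAt
    have hd : HasFDerivAt (fun y : Phase n m => X y.1 i)
        (((proj i : (Fin n → ℝ) →L[ℝ] ℝ).comp (fderiv ℝ X x.1)).comp
          (fst ℝ (Fin n → ℝ) ((Fin n → ℝ) × (Fin m → ℝ)))) x :=
      (((proj i : (Fin n → ℝ) →L[ℝ] ℝ).hasFDerivAt.comp x.1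
          (hX x.1).hasFDerivAt).comp x
        (fst ℝ (Fin n → ℝ) ((Fin n → ℝ) × (Fin m → ℝ))).hasFDerivAt)
    exact hc.mul hd
  have h2 : ∀ α : Fin m, HasFDerivAt (fun y : Phase n m => y.2.2 α * w y.1 α)
      (x.2.2 α • (((proj α : (Fin m → ℝ) →L[ℝ] ℝ).comp (fderiv ℝ w x.1)).comp
          (fst ℝ (Fin n → ℝ) ((Fin n → ℝ) × (Fin m → ℝ))))
        + w x.1 α • ((proj α : (Fin m → ℝ) →L[ℝ] ℝ).comp
            ((snd ℝ (Fin n → ℝ) (Fin m → ℝ)).comp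
              (snd ℝ (Fin n → ℝ) ((Fin n → ℝ) × (Fin m → ℝ)))))) x := by
    intro α
    have hc : HasFDerivAt (fun y : Phase n m => y.2.2 α)
        ((proj α : (Fin m → ℝ) →L[ℝ] ℝ).comp
          ((snd ℝ (Fin n → ℝ) (Fin m → ℝ)).comp
            (snd ℝ (Fin n → ℝ) ((Fin n → ℝ) × (Fin m → ℝ))))) x :=
      ((proj α : (Fin m → ℝ) →L[ℝ] ℝ).comp
          ((snd ℝ (Fin n → ℝ) (Fin m → ℝ)).comp
            (snd ℝ (Fin n → ℝ) ((Fin n → ℝ) × (Fin m → ℝ))))).hasFDerivAt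
    have hd : HasFDerivAt (fun y : Phase n m => w y.1 α)
        (((proj α : (Fin m → ℝ) →L[ℝ] ℝ).comp (fderiv ℝ w x.1)).comp
          (fst ℝ (Fin n → ℝ) ((Fin n → ℝ) × (Fin m → ℝ)))) x :=
      (((proj α : (Fin m → ℝ) →L[ℝ] ℝ).hasFDerivAt.comp x.1
          (hw x.1).hasFDerivAt).comp x
        (fst ℝ (Fin n → ℝ) ((Fin n → ℝ) × (Fin m → ℝ))).hasFDerivAt)
    exact hc.mul hd
  exact (HasFDerivAt.fun_sum (fun i _ => h1 i)).add (HasFDerivAt.fun_sum (fun α _ => h2 α))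

lemma Dq_momP {n m : ℕ} (X : (Fin n → ℝ) → (Fin n → ℝ))
    (w : (Fin n → ℝ) → (Fin m → ℝ)) (hX : Differentiable ℝ X) (hw : Differentiable ℝ w)
    (x : Phase n m) (j : Fin n) :
    Dq (momP X w) x j
      = (∑ i, x.2.1 i * fderiv ℝ X x.1 (Pi.single j 1) i)
        + (∑ α, x.2.2 α * fderiv ℝ w x.1 (Pi.single j 1) α) := by
  have h := (momP_hasFDerivAt X w hX hw x).fderiv
  simp only [Dq, h, ContinuousLinearMap.add_apply, ContinuousLinearMap.coe_sum',
    Finset.sum_apply, ContinuousLinearMap.smul_apply, ContinuousLinearMap.comp_apply,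
    ContinuousLinearMap.coe_fst', ContinuousLinearMap.coe_snd', ContinuousLinearMap.proj_apply,
    map_zero, Pi.zero_apply, smul_eq_mul, mul_zero, add_zero]

lemma Dp_momP {n m : ℕ} (X : (Fin n → ℝ) → (Fin n → ℝ))
    (w : (Fin n → ℝ) → (Fin m → ℝ)) (hX : Differentiable ℝ X) (hw : Differentiable ℝ w)
    (x : Phase n m) : Dp (momP X w) x = X x.1 := by
  funext j
  have h := (momP_hasFDerivAt X w hX hw x).fderiv
  simp only [Dp, h, ContinuousLinearMap.add_apply, ContinuousLinearMap.coe_sum',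
    Finset.sum_apply, ContinuousLinearMap.smul_apply, ContinuousLinearMap.comp_apply,
    ContinuousLinearMap.coe_fst', ContinuousLinearMap.coe_snd', ContinuousLinearMap.proj_apply,
    map_zero, Pi.zero_apply, smul_eq_mul, mul_zero, zero_add, add_zero, mul_zero,
    Pi.single_apply]
  simp [mul_ite]

lemma Dnu_momP {n m : ℕ} (X : (Fin n → ℝ) → (Fin n → ℝ))
    (w : (Fin n → ℝ) → (Fin m → ℝ)) (hX : Differentiable ℝ X) (hw : Differentiable ℝ w)
    (x : Phase n m) : Dnu (momP X w) x = w x.1 := by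
  funext α
  have h := (momP_hasFDerivAt X w hX hw x).fderiv
  simp only [Dnu, h, ContinuousLinearMap.add_apply, ContinuousLinearMap.coe_sum',
    Finset.sum_apply, ContinuousLinearMap.smul_apply, ContinuousLinearMap.comp_apply,
    ContinuousLinearMap.coe_fst', ContinuousLinearMap.coe_snd', ContinuousLinearMap.proj_apply,
    map_zero, Pi.zero_apply, smul_eq_mul, mul_zero, zero_add, add_zero,
    Pi.single_apply]
  simp [mul_ite]

lemma fderiv_dir {n k : ℕ} (F : (Fin n → ℝ) → (Fin k → ℝ)) (hF : Differentiable ℝ F)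
    (q Y : Fin n → ℝ) (i : Fin k) :
    fderiv ℝ F q Y i = ∑ j, Y j * fderiv ℝ F q (Pi.single j 1) i := by
  conv_lhs => rw [pi_eq_sum_univ Y]
  rw [map_sum]
  simp only [Finset.sum_apply, map_smul, Pi.smul_apply, smul_eq_mul]
  refine Finset.sum_congr rfl fun j _ => ?_
  have : (fun k => if j = k then (1:ℝ) else 0) = Pi.single j 1 := by
    ext a; simp [Pi.single_apply, eq_comm]
  rw [this]

lemma key {n m : ℕ} (X : (Fin n → ℝ) → (Fin n → ℝ))
    (w : (Fin n → ℝ) → (Fin m → ℝ)) (hX : Differentiable ℝ X) (hw : Differentiable ℝ w)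
    (x : Phase n m) (v : Fin n → ℝ) :
    (∑ j, Dq (momP X w) x j * v j)
      = (∑ i, x.2.1 i * fderiv ℝ X x.1 v i) + (∑ α, x.2.2 α * fderiv ℝ w x.1 v α) := by
  simp only [Dq_momP X w hX hw, add_mul, Finset.sum_mul, Finset.sum_add_distrib]
  congr 1
  · rw [Finset.sum_comm]
    refine Finset.sum_congr rfl fun i _ => ?_
    rw [fderiv_dir X hX x.1 v i, Finset.mul_sum]
    exact Finset.sum_congr rfl fun j _ => by ring
  · rw [Finset.sum_comm]
    refine Finset.sum_congr rfl fun α _ => ?_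
    rw [fderiv_dir w hw x.1 v α, Finset.mul_sum]
    exact Finset.sum_congr rfl fun j _ => by ring


/-- `⟨∂P(X₁⊕w₁)/∂q, X₂⟩ = P(∇_{X₂}X₁ ⊕ 0) + P(0 ⊕ ∇_{X₂}w₁)`, and consequently
`{P(X₁⊕w₁), P(X₂⊕w₂)} = −P([X₁,X₂]) + P(∇_{X₂}w₁ − ∇_{X₁}w₂) + P(ω(X₁,X₂) − [w₁,w₂])
= −P([X₁⊕w₁, X₂⊕w₂])`. -/
theorem lpPoisson_momentum_functions {n m : ℕ}
    (ω : (Fin n → ℝ) → (Fin n → ℝ) → (Fin n → ℝ) → (Fin m → ℝ))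
    (c : (Fin m → ℝ) → (Fin m → ℝ) → (Fin m → ℝ))
    -- the fiberwise Lie bracket is skew-symmetric
    (hc_skew : ∀ u v, c u v = -c v u)
    (X₁ X₂ : (Fin n → ℝ) → (Fin n → ℝ)) (w₁ w₂ : (Fin n → ℝ) → (Fin m → ℝ))
    (hX₁ : Differentiable ℝ X₁) (hX₂ : Differentiable ℝ X₂)
    (hw₁ : Differentiable ℝ w₁) (hw₂ : Differentiable ℝ w₂) :
    -- `⟨∂P(X₁⊕w₁)/∂q, X₂⟩ = P((∇_{X₂}X₁) ⊕ 0) + P(0 ⊕ ∇_{X₂}w₁)`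
    (∀ x : Phase n m,
      (∑ j, Dq (momP X₁ w₁) x j * X₂ x.1 j)
        = (∑ i, x.2.1 i * fderiv ℝ X₁ x.1 (X₂ x.1) i)
          + (∑ α, x.2.2 α * fderiv ℝ w₁ x.1 (X₂ x.1) α)) ∧
    -- `{P(X₁⊕w₁), P(X₂⊕w₂)} = −P([X₁⊕w₁, X₂⊕w₂])`
    (∀ x : Phase n m,
      lpPoisson ω c (momP X₁ w₁) (momP X₂ w₂) x
        = -(momP (fun q => fderiv ℝ X₂ q (X₁ q) - fderiv ℝ X₁ q (X₂ q))
              (fun q => fderiv ℝ w₂ q (X₁ q) - fderiv ℝ w₁ q (X₂ q)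
                          - ω q (X₁ q) (X₂ q) + c (w₁ q) (w₂ q)) x)) := by
  constructor
  · intro x; exact key X₁ w₁ hX₁ hw₁ x (X₂ x.1)
  · intro x
    have e1 := Dp_momP X₁ w₁ hX₁ hw₁ x
    have e2 := Dp_momP X₂ w₂ hX₂ hw₂ x
    have e3 := Dnu_momP X₁ w₁ hX₁ hw₁ x
    have e4 := Dnu_momP X₂ w₂ hX₂ hw₂ x
    have k1 := key X₁ w₁ hX₁ hw₁ x (X₂ x.1)
    have k2 := key X₂ w₂ hX₂ hw₂ x (X₁ x.1)
    simp only [lpPoisson, e1, e2, e3, e4, Finset.sum_sub_distrib]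
    rw [k1, k2, momP]
    simp only [Pi.add_apply, Pi.sub_apply, hc_skew (w₂ x.1) (w₁ x.1),
      Pi.neg_apply, mul_sub, mul_add, mul_neg, Finset.sum_sub_distrib, Finset.sum_add_distrib,
      neg_add, neg_sub, neg_neg, Finset.sum_neg_distrib]
    ring
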